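/- Segment filling bound (case q < k): suppose boxes all with length in (1/(q+1), 1/q] and width at least w are packed by next-fit into q vertical slips of a segment of height c, such that the packed height in every slip is at least c − 1. Then the total modified volume Σ_R f_k(l(R))·g(w(R))·h(R) of the packed boxes is at least (c−1)·g(w), for any nonincreasing dual feasible function g. -/

import Mathlib

/-- The sequence from the Harmonic algorithm: `t 1 = 1`, `t (i+1) = t i * (t i + 1)`. -/
def tSeq : ℕ → ℕ
  | 0 => 1
  | 1 => 1
  | (n + 2) => tSeq (n + 1) * (tSeq (n + 1) + 1)

/-- The harmonic weighting function `f_k`. -/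
noncomputable def fHarm (k : ℕ) (x : ℝ) : ℝ :=
  if x ≤ 1 / k then k * x / ((k : ℝ) - 1) else 1 / (⌊1 / x⌋ : ℝ)

/-- Segment filling bound (case `q < k`): boxes with length in `(1/(q+1), 1/q]`, width
at least `w0` and height in `(0,1]` are packed by next-fit into `q` slips of a segment
of height `c`, every slip being filled to height at least `c − 1`.  Then the total
modified volume `Σ f_k(l R) * g(w R) * h R` is at least `(c−1) * g w0`, for any
function `g` with `g (w R) ≥ g w0 ≥ 0` on the packed boxes. -/
theorem segment_fill_bound (k q c : ℕ) (hq1 : 1 ≤ q) (hqk : q < k) (hk : 2 ≤ k)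
    (n : ℕ) (l w h : Fin n → ℝ) (w0 : ℝ) (g : ℝ → ℝ) (slip : Fin n → ℕ)
    (hslip : ∀ i, slip i < q)
    (hl : ∀ i, 1 / ((q : ℝ) + 1) < l i ∧ l i ≤ 1 / (q : ℝ))
    (hw : ∀ i, w0 ≤ w i) (hh : ∀ i, 0 < h i ∧ h i ≤ 1)
    (hg : ∀ i, g w0 ≤ g (w i)) (hg0 : 0 ≤ g w0)
    (hfill : ∀ s, s < q →
      (c : ℝ) - 1 ≤ ∑ i ∈ Finset.univ.filter (fun i => slip i = s), h i) :
    ((c : ℝ) - 1) * g w0 ≤ ∑ i, fHarm k (l i) * g (w i) * h i := by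
  have hqR : (0 : ℝ) < q := by exact_mod_cast hq1
  have hkR : (0 : ℝ) < k := by positivity
  -- each box has fHarm value 1/q
  have hf : ∀ i, fHarm k (l i) = 1 / q := by
    intro i
    obtain ⟨hl1, hl2⟩ := hl i
    have hlpos : 0 < l i := lt_trans (by positivity) hl1
    have hk1 : (1 : ℝ) / k ≤ 1 / ((q : ℝ) + 1) := by
      apply one_div_le_one_div_of_le (by positivity)
      exact_mod_cast hqk
    have hnot : ¬ l i ≤ 1 / k := not_le.2 (lt_of_le_of_lt hk1 hl1)
    have hfloor : ⌊1 / l i⌋ = (q : ℤ) := by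
      apply Int.floor_eq_iff.2
      constructor
      · push_cast
        rw [le_div_iff₀ hlpos]
        calc (q : ℝ) * l i ≤ q * (1/q) := by
              exact mul_le_mul_of_nonneg_left hl2 (le_of_lt hqR)
          _ = 1 := by field_simp
      · push_cast
        rw [div_lt_iff₀ hlpos]
        calc (1 : ℝ) = (1 / ((q:ℝ)+1)) * ((q:ℝ)+1) := by field_simp
          _ < l i * ((q:ℝ)+1) := mul_lt_mul_of_pos_right hl1 (by positivity)
          _ = ((q:ℝ)+1) * l i := by ring
    rw [fHarm, if_neg hnot, hfloor]
    norm_num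
  -- pointwise lower bound
  have hterm : ∀ i : Fin n, (1/(q:ℝ)) * g w0 * h i ≤ fHarm k (l i) * g (w i) * h i := by
    intro i
    rw [hf i]
    apply mul_le_mul_of_nonneg_right _ (le_of_lt (hh i).1)
    apply mul_le_mul_of_nonneg_left (hg i) (by positivity)
  have hsum1 : ∑ i, (1/(q:ℝ)) * g w0 * h i ≤ ∑ i, fHarm k (l i) * g (w i) * h i :=
    Finset.sum_le_sum fun i _ => hterm i
  -- total height bound
  have hH : (q : ℝ) * ((c : ℝ) - 1) ≤ ∑ i, h i := by
    have hpart : ∑ s ∈ Finset.range q,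
        (∑ i ∈ Finset.univ.filter (fun i => slip i = s), h i) = ∑ i, h i := by
      apply Finset.sum_fiberwise_of_maps_to
      intro i _
      exact Finset.mem_range.2 (hslip i)
    rw [← hpart]
    calc (q : ℝ) * ((c : ℝ) - 1) = ∑ _s ∈ Finset.range q, ((c : ℝ) - 1) := by
          simp [mul_comm]; ring
      _ ≤ _ := Finset.sum_le_sum fun s hs => hfill s (Finset.mem_range.1 hs)
  calc ((c : ℝ) - 1) * g w0 = (1/(q:ℝ)) * g w0 * ((q : ℝ) * ((c : ℝ) - 1)) := by
        field_simp
    _ ≤ (1/(q:ℝ)) * g w0 * (∑ i, h i) := by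
        apply mul_le_mul_of_nonneg_left hH (by positivity)
    _ = ∑ i, (1/(q:ℝ)) * g w0 * h i := by rw [Finset.mul_sum]
    _ ≤ _ := hsum1
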